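/- The Kullback–Leibler divergence from Weibull(k, λ) to Gamma(α, β) equals (γα)/k - α·ln λ + ln k + β·λ·Γ(1 + 1/k) - γ - 1 - α·ln β + ln Γ(α), where γ is the Euler–Mascheroni constant. -/

import Mathlib

open MeasureTheory Set

/-- Weibull density with shape k and scale λ. -/
noncomputable def weibullPDF (k lam x : ℝ) : ℝ :=
  (k / lam) * (x / lam) ^ (k - 1) * Real.exp (-(x / lam) ^ k)

/-- Gamma density with shape α and rate β. -/
noncomputable def gammaPDF' (α β x : ℝ) : ℝ :=
  β ^ α * x ^ (α - 1) * Real.exp (-β * x) / Real.Gamma α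

local notation "γ" => Real.eulerMascheroniConstant


lemma mellin_pair :
    MellinConvergent (fun t => Real.log t • ((Real.exp (-t) : ℝ) : ℂ)) 1 ∧
      HasDerivAt (mellin fun x : ℝ => ((Real.exp (-x) : ℝ) : ℂ))
        (mellin (fun t => Real.log t • ((Real.exp (-t) : ℝ) : ℂ)) 1) 1 := by
  refine mellin_hasDerivAt_of_isBigO_rpow (a := 2) (b := 0) ?_ ?_ (by norm_num) ?_ (by norm_num)
  · refine (Continuous.continuousOn ?_).locallyIntegrableOn measurableSet_Ioi
    exact Complex.continuous_ofReal.comp (Real.continuous_exp.comp continuous_neg)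
  · rw [← Asymptotics.isBigO_norm_left]
    simp_rw [Complex.norm_real,
      Asymptotics.isBigO_norm_left]
    simpa only [neg_one_mul] using (isLittleO_exp_neg_mul_rpow_atTop zero_lt_one _).isBigO
  · simp_rw [neg_zero, Real.rpow_zero]
    refine Asymptotics.isBigO_const_of_tendsto (?_ : Filter.Tendsto _ _ (nhds (1 : ℂ))) one_ne_zero
    rw [(by simp : (1 : ℂ) = Real.exp (-0))]
    exact (Complex.continuous_ofReal.comp
      (Real.continuous_exp.comp continuous_neg)).continuousWithinAt

lemma exp_log_integrableOn :
    IntegrableOn (fun t => Real.exp (-t) * Real.log t) (Ioi (0:ℝ)) := by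
  have h := mellin_pair.1
  unfold MellinConvergent at h
  simp only [sub_self, Complex.cpow_zero, one_smul] at h
  have h2 : Integrable (fun t : ℝ => RCLike.re (Real.log t • ((Real.exp (-t) : ℝ) : ℂ)))
      (volume.restrict (Ioi (0:ℝ))) := h.re
  refine h2.congr (Filter.Eventually.of_forall fun t => ?_)
  simp [Complex.real_smul, ← Complex.ofReal_mul, mul_comm, ← Complex.ofReal_neg, Complex.exp_ofReal_re]

lemma integral_exp_log : ∫ t in Ioi (0:ℝ), Real.exp (-t) * Real.log t = -γ := by
  set I : ℝ := ∫ t in Ioi (0:ℝ), Real.exp (-t) * Real.log t with hI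
  have hC : HasDerivAt Complex.Gamma ((I : ℂ)) 1 := by
    have h := Complex.hasDerivAt_GammaIntegral (s := 1) (by norm_num)
    have heq : (∫ t : ℝ in Ioi 0, (t:ℂ) ^ ((1:ℂ) - 1) * (Real.log t * Real.exp (-t))) = (I : ℂ) := by
      simp only [sub_self, Complex.cpow_zero, one_mul, ← Complex.ofReal_mul]
      rw [show (fun t : ℝ => ((Real.log t * Real.exp (-t) : ℝ) : ℂ)) = fun t : ℝ => ((RCLike.ofReal (Real.log t * Real.exp (-t)) : ℂ)) from rfl, integral_ofReal, hI]
      norm_num [mul_comm]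
    rw [heq] at h
    refine h.congr_of_eventuallyEq ?_
    filter_upwards [(isOpen_lt continuous_const Complex.continuous_re).mem_nhds
      (by norm_num : (0:ℝ) < Complex.re 1)] with s hs
    exact Complex.Gamma_eq_integral hs
  have hR : HasDerivAt Real.Gamma I 1 := by
    have h2 := hC.real_of_complex
    simp only [Complex.ofReal_re] at h2
    refine h2.congr_of_eventuallyEq (Filter.Eventually.of_forall fun x => ?_)
    simp only [Complex.Gamma_ofReal, Complex.ofReal_re]
  exact hR.unique Real.hasDerivAt_Gamma_one

section
variable {k lam : ℝ} (hk : 0 < k) (hlam : 0 < lam)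

lemma rpow_inv_rpow' (hk : 0 < k) {x : ℝ} (hx : 0 < x) : (x ^ (1/k)) ^ k = x := by
  rw [← Real.rpow_mul hx.le, one_div, inv_mul_cancel₀ hk.ne', Real.rpow_one]

lemma phi_image (hk : 0 < k) (hlam : 0 < lam) :
    (fun u : ℝ => lam * u ^ (1/k)) '' Ioi 0 = Ioi 0 := by
  ext y
  constructor
  · rintro ⟨u, hu, rfl⟩
    exact mul_pos hlam (Real.rpow_pos_of_pos hu _)
  · intro hy
    refine ⟨(y / lam) ^ k, Real.rpow_pos_of_pos (div_pos hy hlam) _, ?_⟩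
    show lam * ((y / lam) ^ k) ^ (1/k) = y
    rw [← Real.rpow_mul (div_pos hy hlam).le, mul_one_div_cancel hk.ne', Real.rpow_one,
      mul_div_cancel₀ _ hlam.ne']

lemma phi_inj (hk : 0 < k) (hlam : 0 < lam) :
    InjOn (fun u : ℝ => lam * u ^ (1/k)) (Ioi 0) := by
  intro a ha b hb h
  have h' : a ^ (1/k) = b ^ (1/k) := mul_left_cancel₀ hlam.ne' h
  have h2 : (a ^ (1/k)) ^ k = (b ^ (1/k)) ^ k := by rw [h']
  rwa [rpow_inv_rpow' hk ha, rpow_inv_rpow' hk hb] at h2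

lemma phi_deriv (hk : 0 < k) (lam : ℝ) : ∀ u ∈ Ioi (0:ℝ),
    HasDerivWithinAt (fun u : ℝ => lam * u ^ (1/k))
      (lam * ((1/k) * u ^ (1/k - 1))) (Ioi 0) u := by
  intro u hu
  exact ((Real.hasDerivAt_rpow_const (Or.inl (ne_of_gt hu))).const_mul lam).hasDerivWithinAt

lemma density_cancel (hk : 0 < k) (hlam : 0 < lam) {u : ℝ} (hu : 0 < u) :
    |lam * ((1/k) * u ^ (1/k - 1))| * weibullPDF k lam (lam * u ^ (1/k)) = Real.exp (-u) := by
  have h1 : lam * u ^ (1/k) / lam = u ^ (1/k) := mul_div_cancel_left₀ _ hlam.ne'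
  have hup : (0:ℝ) < u ^ (1/k) := Real.rpow_pos_of_pos hu _
  rw [weibullPDF, h1, abs_of_pos (by positivity), rpow_inv_rpow' hk hu,
    ← Real.rpow_mul hu.le]
  have e2 : u ^ (1/k - 1) * u ^ (1/k * (k - 1)) = 1 := by
    rw [← Real.rpow_add hu, show 1/k - 1 + 1/k * (k - 1) = 0 by field_simp; ring, Real.rpow_zero]
  calc lam * (1/k * u ^ (1/k - 1)) * (k / lam * u ^ (1/k * (k-1)) * Real.exp (-u))
      = (u ^ (1/k - 1) * u ^ (1/k * (k - 1))) * ((lam * (1/k) * (k / lam)) * Real.exp (-u)) := by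
        ring
    _ = Real.exp (-u) := by rw [e2]; field_simp
end

lemma weibullPDF_pos {k lam x : ℝ} (hk : 0 < k) (hlam : 0 < lam) (hx : 0 < x) :
    0 < weibullPDF k lam x := by
  unfold weibullPDF
  have : (0:ℝ) < (x / lam) ^ (k - 1) := Real.rpow_pos_of_pos (div_pos hx hlam) _
  positivity

lemma gammaPDF'_pos {α β x : ℝ} (hα : 0 < α) (hβ : 0 < β) (hx : 0 < x) :
    0 < gammaPDF' α β x := by
  unfold gammaPDF'
  have h1 : (0:ℝ) < β ^ α := Real.rpow_pos_of_pos hβ _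
  have h2 : (0:ℝ) < x ^ (α - 1) := Real.rpow_pos_of_pos hx _
  have h3 : (0:ℝ) < Real.Gamma α := Real.Gamma_pos_of_pos hα
  positivity

lemma log_ratio {k lam α β x : ℝ} (hk : 0 < k) (hlam : 0 < lam) (hα : 0 < α) (hβ : 0 < β)
    (hx : 0 < x) :
    Real.log (weibullPDF k lam x / gammaPDF' α β x)
      = Real.log k - k * Real.log lam + (k - α) * Real.log x - (x / lam) ^ k + β * x
        - α * Real.log β + Real.log (Real.Gamma α) := by
  have hxl : (0:ℝ) < x / lam := div_pos hx hlam
  have h1 : (0:ℝ) < (x / lam) ^ (k - 1) := Real.rpow_pos_of_pos hxl _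
  have h2 : (0:ℝ) < β ^ α := Real.rpow_pos_of_pos hβ _
  have h3 : (0:ℝ) < x ^ (α - 1) := Real.rpow_pos_of_pos hx _
  have h4 : (0:ℝ) < Real.Gamma α := Real.Gamma_pos_of_pos hα
  rw [Real.log_div (weibullPDF_pos hk hlam hx).ne' (gammaPDF'_pos hα hβ hx).ne',
    weibullPDF, gammaPDF']
  rw [Real.log_mul (by positivity) (Real.exp_pos _).ne',
    Real.log_mul (by positivity) h1.ne', Real.log_exp,
    Real.log_div (by positivity) h4.ne',
    Real.log_mul (by positivity) (Real.exp_pos _).ne',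
    Real.log_mul h2.ne' h3.ne', Real.log_exp,
    Real.log_rpow hxl, Real.log_rpow hβ, Real.log_rpow hx,
    Real.log_div hk.ne' hlam.ne', Real.log_div hx.ne' hlam.ne']
  ring

lemma int_exp : IntegrableOn (fun u : ℝ => Real.exp (-u)) (Ioi 0) := by
  simpa using exp_neg_integrableOn_Ioi 0 one_pos

lemma int_exp_mul : IntegrableOn (fun u : ℝ => Real.exp (-u) * u) (Ioi 0) := by
  refine (Real.GammaIntegral_convergent (by norm_num : (0:ℝ) < 2)).congr_fun
    (fun x hx => ?_) measurableSet_Ioi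
  norm_num [Real.rpow_one]

lemma val_exp_mul : ∫ u in Ioi (0:ℝ), Real.exp (-u) * u = 1 := by
  rw [show (1:ℝ) = Real.Gamma 2 from Real.Gamma_two.symm,
    Real.Gamma_eq_integral (by norm_num : (0:ℝ) < 2)]
  refine setIntegral_congr_fun measurableSet_Ioi fun x hx => ?_
  norm_num [Real.rpow_one]

lemma int_exp_rpow {c : ℝ} (hc : 0 < c) :
    IntegrableOn (fun u : ℝ => Real.exp (-u) * u ^ c) (Ioi 0) := by
  refine (Real.GammaIntegral_convergent (by positivity : (0:ℝ) < 1 + c)).congr_fun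
    (fun x hx => ?_) measurableSet_Ioi
  rw [add_sub_cancel_left]

lemma val_exp_rpow {c : ℝ} (hc : 0 < c) :
    ∫ u in Ioi (0:ℝ), Real.exp (-u) * u ^ c = Real.Gamma (1 + c) := by
  rw [Real.Gamma_eq_integral (by positivity : (0:ℝ) < 1 + c)]
  refine setIntegral_congr_fun measurableSet_Ioi fun x hx => ?_
  rw [add_sub_cancel_left]


/-- KL(Weibull(k,λ) ‖ Gamma(α,β)) =
γα/k - α ln λ + ln k + βλΓ(1+1/k) - γ - 1 - α ln β + ln Γ(α). -/
theorem stmt_5 (k lam α β : ℝ) (hk : 0 < k) (hlam : 0 < lam) (hα : 0 < α) (hβ : 0 < β) :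
    ∫ x in Ioi (0:ℝ), weibullPDF k lam x * Real.log (weibullPDF k lam x / gammaPDF' α β x)
      = Real.eulerMascheroniConstant * α / k - α * Real.log lam + Real.log k
        + β * lam * Real.Gamma (1 + 1 / k) - Real.eulerMascheroniConstant - 1
        - α * Real.log β + Real.log (Real.Gamma α) := by
  have h1k : (0:ℝ) < 1 / k := by positivity
  set A : ℝ := Real.log k - α * Real.log lam + Real.log (Real.Gamma α) - α * Real.log β with hA
  set B : ℝ := (k - α) / k with hB
  set D : ℝ := β * lam with hD
  rw [← phi_image hk hlam, integral_image_eq_integral_abs_deriv_smul measurableSet_Ioi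
    (phi_deriv hk lam) (phi_inj hk hlam)]
  have hEq : EqOn
      (fun u : ℝ => |lam * ((1/k) * u ^ (1/k - 1))| •
        (weibullPDF k lam (lam * u ^ (1/k)) *
          Real.log (weibullPDF k lam (lam * u ^ (1/k)) / gammaPDF' α β (lam * u ^ (1/k)))))
      (fun u : ℝ => A * Real.exp (-u) + B * (Real.exp (-u) * Real.log u)
        - Real.exp (-u) * u + D * (Real.exp (-u) * u ^ (1/k))) (Ioi 0) := by
    intro u hu
    have hu' : (0:ℝ) < u := hu
    have hup : (0:ℝ) < u ^ (1/k) := Real.rpow_pos_of_pos hu' _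
    have hx : (0:ℝ) < lam * u ^ (1/k) := mul_pos hlam hup
    simp only [smul_eq_mul]
    rw [← mul_assoc, density_cancel hk hlam hu', log_ratio hk hlam hα hβ hx,
      Real.log_mul hlam.ne' hup.ne', Real.log_rpow hu',
      mul_div_cancel_left₀ _ hlam.ne', rpow_inv_rpow' hk hu', hA, hB, hD]
    field_simp
    ring
  rw [setIntegral_congr_fun measurableSet_Ioi hEq]
  have i1 : IntegrableOn (fun u : ℝ => A * Real.exp (-u)) (Ioi 0) := int_exp.const_mul A
  have i2 : IntegrableOn (fun u : ℝ => B * (Real.exp (-u) * Real.log u)) (Ioi 0) :=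
    exp_log_integrableOn.const_mul B
  have i4 : IntegrableOn (fun u : ℝ => D * (Real.exp (-u) * u ^ (1/k))) (Ioi 0) :=
    (int_exp_rpow h1k).const_mul D
  have i12 : IntegrableOn (fun u : ℝ => A * Real.exp (-u)
      + B * (Real.exp (-u) * Real.log u)) (Ioi 0) := i1.add i2
  have i123 : IntegrableOn (fun u : ℝ => A * Real.exp (-u)
      + B * (Real.exp (-u) * Real.log u) - Real.exp (-u) * u) (Ioi 0) := i12.sub int_exp_mul
  rw [integral_add i123 i4, integral_sub i12 int_exp_mul,
    integral_add i1 i2, MeasureTheory.integral_const_mul, MeasureTheory.integral_const_mul, MeasureTheory.integral_const_mul,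
    integral_exp_neg_Ioi_zero, integral_exp_log, val_exp_mul, val_exp_rpow h1k, hA, hB, hD]
  field_simp
  ring
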